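/- With Q₁ = ℂ[c₁,c₂,d₂]/J₁ as in the previous statement, the quotient ring Q₁/(c₁) is a 1-dimensional ℂ-vector space; equivalently, the zero locus of c₁ in Spec Q₁ has length 1. -/
import Mathlib


open MvPolynomial

noncomputable section

abbrev qc1 : MvPolynomial (Fin 3) ℂ := X 0
abbrev qc2 : MvPolynomial (Fin 3) ℂ := X 1
abbrev qd2 : MvPolynomial (Fin 3) ℂ := X 2

/-- The ideal of the `q = 1` specializations of the quantum relations. -/
def quantumIdeal : Ideal (MvPolynomial (Fin 3) ℂ) :=
  Ideal.span {qc1 ^ 4 - 11 * qc1 + 3 * qc2 ^ 2 - 9 * qc2 * qd2 - 3 * qd2 ^ 2,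
    qc1 ^ 2 * qc2 - 3 * qc1 - qc2 * qd2 - 3 * qd2 ^ 2,
    qc1 ^ 2 * qd2 - 2 * qc1 - 3 * qd2 ^ 2,
    9 * (qc1 * qc2 ^ 2 - 4 * qc1 ^ 2 + 3 * qc2 + qd2)
      - 14 * (qc1 * qc2 * qd2 - 3 * qc1 ^ 2 + qc2 + 3 * qd2),
    2 * (qc1 * qc2 * qd2 - 3 * qc1 ^ 2 + qc2 + 3 * qd2)
      - 3 * (qc1 * qd2 ^ 2 - 2 * qc1 ^ 2 + 3 * qd2)}

/-- `Q₁ = ℂ[c₁,c₂,d₂]/J₁`: the `q = 1` specialization of the small quantum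
cohomology ring of `Y`. -/
abbrev QuantumRing : Type := MvPolynomial (Fin 3) ℂ ⧸ quantumIdeal

/-- Evaluation at the origin. -/
abbrev qev : MvPolynomial (Fin 3) ℂ →ₐ[ℂ] ℂ := aeval (fun _ => (0 : ℂ))

lemma g4_mem : 9 * (qc1 * qc2 ^ 2 - 4 * qc1 ^ 2 + 3 * qc2 + qd2)
      - 14 * (qc1 * qc2 * qd2 - 3 * qc1 ^ 2 + qc2 + 3 * qd2) ∈ quantumIdeal :=
  Ideal.subset_span (by simp)

lemma g5_mem : 2 * (qc1 * qc2 * qd2 - 3 * qc1 ^ 2 + qc2 + 3 * qd2)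
      - 3 * (qc1 * qd2 ^ 2 - 2 * qc1 ^ 2 + 3 * qd2) ∈ quantumIdeal :=
  Ideal.subset_span (by simp)

lemma X_mem_sup (i : Fin 3) : X i ∈ quantumIdeal ⊔ Ideal.span {qc1} := by
  have hg4 := Ideal.mem_sup_left (T := Ideal.span {qc1}) g4_mem
  have hg5 := Ideal.mem_sup_left (T := Ideal.span {qc1}) g5_mem
  have hc1 : qc1 ∈ quantumIdeal ⊔ Ideal.span {qc1} :=
    Ideal.mem_sup_right (Ideal.subset_span rfl)
  have h27 : ∀ p : MvPolynomial (Fin 3) ℂ,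
      27 * p ∈ quantumIdeal ⊔ Ideal.span {qc1} → p ∈ quantumIdeal ⊔ Ideal.span {qc1} := by
    intro p hp
    have : p = C (27⁻¹ : ℂ) * (27 * p) := by
      rw [show (27 : MvPolynomial (Fin 3) ℂ) = C 27 from (map_ofNat C 27).symm, ← mul_assoc, ← C_mul]
      norm_num
    rw [this]
    exact Ideal.mul_mem_left _ _ hp
  fin_cases i
  · exact hc1
  · refine h27 _ ?_
    have := Ideal.add_mem _ (Ideal.add_mem _
      (Ideal.mul_mem_left _ (-3) hg4) (Ideal.mul_mem_left _ 33 hg5))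
      (Ideal.mul_mem_left _ (27 * qc2 ^ 2 + 18 * qc1 - 108 * qc2 * qd2 + 99 * qd2 ^ 2) hc1)
    convert this using 1
    show 27 * qc2 = _
    ring
  · refine h27 _ ?_
    have := Ideal.add_mem _ (Ideal.add_mem _
      (Ideal.mul_mem_left _ (-2) hg4) (Ideal.mul_mem_left _ 13 hg5))
      (Ideal.mul_mem_left _ (18 * qc2 ^ 2 + 12 * qc1 - 54 * qc2 * qd2 + 39 * qd2 ^ 2) hc1)
    convert this using 1
    show 27 * qd2 = _
    ring

lemma quantum_sup_eq_ker :
    quantumIdeal ⊔ Ideal.span {qc1} = RingHom.ker qev := by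
  apply le_antisymm
  · refine sup_le (Ideal.span_le.2 ?_) (Ideal.span_le.2 ?_) <;>
      intro p hp <;> simp only [Set.mem_insert_iff, Set.mem_singleton_iff] at hp <;>
      rcases hp with rfl | rfl | rfl | rfl | rfl <;>
      simp [RingHom.mem_ker, qc1, qc2, qd2]
  · intro p hp
    rw [RingHom.mem_ker] at hp
    have hc : constantCoeff p = 0 := by
      have h2 := aeval_zero' (S₁ := ℂ) p
      simpa [h2] using hp
    have hmem : p ∈ Ideal.span (X '' (Set.univ : Set (Fin 3)) :
        Set (MvPolynomial (Fin 3) ℂ)) := by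
      rw [mem_ideal_span_X_image]
      intro m hm
      by_contra h
      push_neg at h
      have hm0 : m = 0 := by
        ext i
        simpa using h i (Set.mem_univ i)
      rw [hm0] at hm
      exact (mem_support_iff.1 hm) hc
    refine Ideal.span_le.2 ?_ hmem
    rintro q ⟨i, -, rfl⟩
    exact X_mem_sup i

lemma qev_surjective : Function.Surjective qev :=
  fun z => ⟨C z, by simp⟩

/-- The zero locus of `c₁` in `Spec Q₁` has length 1: `Q₁/(c₁)` is 1-dimensional. -/
theorem quantumRing_c1_quotient_dim_one :
    Module.finrank ℂ
      (QuantumRing ⧸ Ideal.span {Ideal.Quotient.mk quantumIdeal qc1}) = 1 := by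
  have h1 : Ideal.span {Ideal.Quotient.mk quantumIdeal qc1} =
      (Ideal.span {qc1}).map (Ideal.Quotient.mkₐ ℂ quantumIdeal) := by
    rw [Ideal.map_span, Set.image_singleton, Ideal.Quotient.mkₐ_eq_mk]
  have e1 : (QuantumRing ⧸ Ideal.span {Ideal.Quotient.mk quantumIdeal qc1}) ≃ₐ[ℂ]
      MvPolynomial (Fin 3) ℂ ⧸ (quantumIdeal ⊔ Ideal.span {qc1}) :=
    (Ideal.quotientEquivAlgOfEq ℂ h1).trans
      (DoubleQuot.quotQuotEquivQuotSupₐ ℂ quantumIdeal (Ideal.span {qc1}))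
  have e2 : (MvPolynomial (Fin 3) ℂ ⧸ (quantumIdeal ⊔ Ideal.span {qc1})) ≃ₐ[ℂ] ℂ :=
    (Ideal.quotientEquivAlgOfEq ℂ quantum_sup_eq_ker).trans
      (Ideal.quotientKerAlgEquivOfSurjective qev_surjective)
  rw [(e1.trans e2).toLinearEquiv.finrank_eq, Module.finrank_self]

end
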